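/- The classes of positive semidefinite matrices and of entrywise nonnegative symmetric matrices are each closed under the last-row-duplication lifting: if Q = [[M, m],[mᵀ, μ]] is positive semidefinite (resp. entrywise nonnegative), then Q̃ = [[M, m, m],[mᵀ, μ, μ],[mᵀ, μ, μ]] is positive semidefinite (resp. entrywise nonnegative). Consequently, if Q ∈ S⁺ + N then Q̃ ∈ S⁺ + N, and if Q ∉ S⁺ + N is copositive then Q̃ ∉ S⁺ + N. -/
import Mathlib


open Matrix

/-- The quadratic form `x ↦ xᵀ B x`. -/
def qf {n : ℕ} (B : Matrix (Fin n) (Fin n) ℝ) (x : Fin n → ℝ) : ℝ := x ⬝ᵥ B.mulVec x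

/-- Coercion of an integer vector to a real vector. -/
def intCast {n : ℕ} (v : Fin n → ℤ) : Fin n → ℝ := fun i => (v i : ℝ)

/-- `B` is strictly copositive: `xᵀBx > 0` for all nonzero nonnegative `x`. -/
def StrictlyCopositive {n : ℕ} (B : Matrix (Fin n) (Fin n) ℝ) : Prop :=
  ∀ x : Fin n → ℝ, (∀ i, 0 ≤ x i) → x ≠ 0 → 0 < qf B x

/-- The copositive minimum: infimum of `vᵀBv` over nonzero nonnegative integer vectors. -/
noncomputable def copoMin {n : ℕ} (B : Matrix (Fin n) (Fin n) ℝ) : ℝ :=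
  sInf {r : ℝ | ∃ v : Fin n → ℤ, (∀ i, 0 ≤ v i) ∧ v ≠ 0 ∧ r = qf B (intCast v)}

/-- The set of nonzero nonnegative integer vectors attaining the copositive minimum. -/
def MinCOP {n : ℕ} (B : Matrix (Fin n) (Fin n) ℝ) : Set (Fin n → ℤ) :=
  {v | (∀ i, 0 ≤ v i) ∧ v ≠ 0 ∧ qf B (intCast v) = copoMin B}

/-- `B` is perfect copositive: strictly copositive and uniquely determined among
symmetric matrices by the equations `vᵀQv = copoMin B` for `v ∈ MinCOP B`. -/
def IsPerfectCopositive {n : ℕ} (B : Matrix (Fin n) (Fin n) ℝ) : Prop :=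
  B.IsSymm ∧ StrictlyCopositive B ∧
    ∀ Q : Matrix (Fin n) (Fin n) ℝ, Q.IsSymm →
      (∀ v ∈ MinCOP B, qf Q (intCast v) = copoMin B) → Q = B

/-- Maps the last two indices of `Fin (n+2)` to the last index of `Fin (n+1)`,
and is the identity on the other indices. -/
def contract (n : ℕ) (i : Fin (n + 2)) : Fin (n + 1) :=
  if h : (i : ℕ) < n + 1 then ⟨i, h⟩ else ⟨n, Nat.lt_succ_self n⟩

/-- The lift `Q̃` of `Q`, obtained by duplicating the last row and column. -/
def dupLift {n : ℕ} (Q : Matrix (Fin (n + 1)) (Fin (n + 1)) ℝ) :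
    Matrix (Fin (n + 2)) (Fin (n + 2)) ℝ :=
  fun i j => Q (contract n i) (contract n j)

/-- `Q` lies in `S⁺ + N`, i.e. it is a sum of a positive semidefinite matrix and an
entrywise nonnegative symmetric matrix. -/
def InSplusN {n : ℕ} (Q : Matrix (Fin n) (Fin n) ℝ) : Prop :=
  ∃ A B : Matrix (Fin n) (Fin n) ℝ,
    A.PosSemidef ∧ B.IsSymm ∧ (∀ i j, 0 ≤ B i j) ∧ Q = A + B

theorem lifting_closed_classes {n : ℕ} (Q : Matrix (Fin (n + 1)) (Fin (n + 1)) ℝ)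
    (hQ : Q.IsSymm) :
    (Q.PosSemidef → (dupLift Q).PosSemidef) ∧
    ((∀ i j, 0 ≤ Q i j) → ∀ i j, 0 ≤ dupLift Q i j) ∧
    (InSplusN Q → InSplusN (dupLift Q)) ∧
    ((∀ x : Fin (n + 1) → ℝ, (∀ i, 0 ≤ x i) → 0 ≤ qf Q x) → ¬ InSplusN Q →
      ¬ InSplusN (dupLift Q)) := by
  have hdup : ∀ (M : Matrix (Fin (n + 1)) (Fin (n + 1)) ℝ),
      dupLift M = M.submatrix (contract n) (contract n) := fun _ => rfl
  have hpsd : ∀ (M : Matrix (Fin (n + 1)) (Fin (n + 1)) ℝ), M.PosSemidef →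
      (dupLift M).PosSemidef := by
    intro M hM
    rw [hdup]
    exact hM.submatrix _
  have hsymm : ∀ (M : Matrix (Fin (n + 1)) (Fin (n + 1)) ℝ), M.IsSymm →
      (dupLift M).IsSymm := by
    intro M hM
    ext i j
    simp only [Matrix.transpose_apply, dupLift]
    exact (Matrix.IsSymm.apply hM _ _).symm
  have hsum : ∀ (M : Matrix (Fin (n + 1)) (Fin (n + 1)) ℝ), InSplusN M → InSplusN (dupLift M) := by
    rintro M ⟨A, B, hA, hB, hBpos, rfl⟩
    refine ⟨dupLift A, dupLift B, hpsd A hA, hsymm B hB, fun i j => hBpos _ _, ?_⟩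
    ext i j
    simp [dupLift, Matrix.add_apply]
  refine ⟨hpsd Q, fun h i j => h _ _, hsum Q, fun _ hnot hlift => hnot ?_⟩
  obtain ⟨A, B, hA, hB, hBpos, hEq⟩ := hlift
  refine ⟨A.submatrix Fin.castSucc Fin.castSucc, B.submatrix Fin.castSucc Fin.castSucc,
    hA.submatrix _, ?_, fun i j => hBpos _ _, ?_⟩
  · ext i j
    simp only [Matrix.transpose_apply, Matrix.submatrix_apply]
    exact (Matrix.IsSymm.apply hB _ _).symm
  · ext i j
    have hc : ∀ k : Fin (n + 1), contract n (Fin.castSucc k) = k := by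
      intro k
      simp [contract, Fin.castSucc, Fin.is_lt k]
    have := congrFun (congrFun hEq (Fin.castSucc i)) (Fin.castSucc j)
    simp only [dupLift, hc] at this
    simpa [Matrix.add_apply] using this
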